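/- Let A be a real m×n matrix with all rows a_1,…,a_m nonzero, let b ∈ ℝ^m with Ax = b, and let y ∈ ℝ^n with y ≠ x and π_i y ≠ x for every i ∈ {1,…,m}. Then Σ_{i=1}^{m} (‖a_i‖²/‖A‖_F²)·log(‖π_i y − x‖/‖y − x‖) ≤ (1/2)·log(1 − ‖A(y − x)‖²/(‖A‖_F²·‖y − x‖²)). -/

import Mathlib

noncomputable section

/-- The `i`-th row of `A` as a vector in Euclidean space. -/
def rowv {m n : ℕ} (A : Matrix (Fin m) (Fin n) ℝ) (i : Fin m) : EuclideanSpace ℝ (Fin n) :=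
  WithLp.toLp 2 (fun j => A i j)

/-- Matrix-vector multiplication, landing in Euclidean space. -/
def mulV {m n : ℕ} (A : Matrix (Fin m) (Fin n) ℝ) (v : EuclideanSpace ℝ (Fin n)) :
    EuclideanSpace ℝ (Fin m) := WithLp.toLp 2 (fun i => ∑ j, A i j * v j)

/-- The square of the Frobenius norm `‖A‖_F²`. -/
def frobSq {m n : ℕ} (A : Matrix (Fin m) (Fin n) ℝ) : ℝ := ∑ i, ∑ j, (A i j) ^ 2

/-- The operator norm `‖A‖` (ℓ² → ℓ²). -/
def opN {m n : ℕ} (A : Matrix (Fin m) (Fin n) ℝ) : ℝ :=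
  ‖LinearMap.toContinuousLinearMap (Matrix.toEuclideanLin A)‖

/-- Orthogonal projection of `w` onto the hyperplane `{v : ⟨a_i, v⟩ = b_i}`. -/
def proj {m n : ℕ} (A : Matrix (Fin m) (Fin n) ℝ) (b : EuclideanSpace ℝ (Fin m)) (i : Fin m)
    (w : EuclideanSpace ℝ (Fin n)) : EuclideanSpace ℝ (Fin n) :=
  w + ((b i - inner (𝕜 := ℝ) (rowv A i) w) / ‖rowv A i‖ ^ 2) • rowv A i

/-- The Kaczmarz trajectory: `traj A b x0 ω j` is `x_j(ω) = π_{ω_j} ⋯ π_{ω_1} x_0`. -/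
def traj {m n k : ℕ} (A : Matrix (Fin m) (Fin n) ℝ) (b : EuclideanSpace ℝ (Fin m))
    (x0 : EuclideanSpace ℝ (Fin n)) (ω : Fin k → Fin m) : ℕ → EuclideanSpace ℝ (Fin n)
  | 0 => x0
  | j + 1 => if h : j < k then proj A b (ω ⟨j, h⟩) (traj A b x0 ω j) else traj A b x0 ω j

/-- The weight `∏_j ‖a_{ω_j}‖²/‖A‖_F²` of an index sequence `ω` for the random Kaczmarz
process. -/
def wt {m n k : ℕ} (A : Matrix (Fin m) (Fin n) ℝ) (ω : Fin k → Fin m) : ℝ :=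
  ∏ j, ‖rowv A (ω j)‖ ^ 2 / frobSq A

end

lemma inner_rowv {m n : ℕ} (A : Matrix (Fin m) (Fin n) ℝ) (v : EuclideanSpace ℝ (Fin n))
    (i : Fin m) : inner (𝕜 := ℝ) (rowv A i) v = mulV A v i := by
  simp [rowv, mulV, PiLp.inner_apply, RCLike.inner_apply, conj_trivial, mul_comm]

lemma normsq_eucl {k : ℕ} (v : EuclideanSpace ℝ (Fin k)) : ‖v‖ ^ 2 = ∑ i, v i ^ 2 := by
  rw [EuclideanSpace.norm_eq, Real.sq_sqrt (by positivity)]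
  simp [sq_abs]

lemma frobSq_eq {m n : ℕ} (A : Matrix (Fin m) (Fin n) ℝ) :
    frobSq A = ∑ i, ‖rowv A i‖ ^ 2 := by
  simp [frobSq, normsq_eucl, rowv]

/-- **One-step logarithmic bound.** For `y ≠ x` with `Ax = b` and `π_i y ≠ x` for all `i`,
`Σ_i (‖a_i‖²/‖A‖_F²) log(‖π_i y − x‖/‖y−x‖) ≤ (1/2) log(1 − ‖A(y−x)‖²/(‖A‖_F² ‖y−x‖²))`. -/
theorem one_step_log_bound {m n : ℕ} (A : Matrix (Fin m) (Fin n) ℝ)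
    (hrows : ∀ i, rowv A i ≠ 0) (x : EuclideanSpace ℝ (Fin n))
    (b : EuclideanSpace ℝ (Fin m)) (hAx : mulV A x = b)
    (y : EuclideanSpace ℝ (Fin n)) (hy : y ≠ x) (hproj : ∀ i : Fin m, proj A b i y ≠ x) :
    ∑ i : Fin m, (‖rowv A i‖ ^ 2 / frobSq A) * Real.log (‖proj A b i y - x‖ / ‖y - x‖) ≤
      (1 / 2) * Real.log (1 - ‖mulV A (y - x)‖ ^ 2 / (frobSq A * ‖y - x‖ ^ 2)) := by
  rcases Nat.eq_zero_or_pos m with hm | hm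
  · subst hm
    have h0 : mulV A (y - x) = 0 := Subsingleton.elim _ _
    simp [frobSq, h0]
  set e := y - x with he_def
  have he : e ≠ 0 := sub_ne_zero.mpr hy
  have hE : (0:ℝ) < ‖e‖ := norm_pos_iff.mpr he
  have hF : 0 < frobSq A := by
    rw [frobSq_eq]
    apply Finset.sum_pos
    · intro i _
      exact pow_pos (norm_pos_iff.mpr (hrows i)) 2
    · exact ⟨⟨0, hm⟩, Finset.mem_univ _⟩
  -- projection difference formula
  have hdiff : ∀ i, proj A b i y - x
      = e - ((inner (𝕜 := ℝ) (rowv A i) e) / ‖rowv A i‖ ^ 2) • rowv A i := by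
    intro i
    have hb : b i = inner (𝕜 := ℝ) (rowv A i) x := by rw [← hAx, inner_rowv]
    have : b i - inner (𝕜 := ℝ) (rowv A i) y = -(inner (𝕜 := ℝ) (rowv A i) e) := by
      rw [hb, he_def, inner_sub_right]; ring
    rw [proj, this]
    module
  -- squared norm
  have hpi : ∀ i, ‖proj A b i y - x‖ ^ 2
      = ‖e‖ ^ 2 - (inner (𝕜 := ℝ) (rowv A i) e) ^ 2 / ‖rowv A i‖ ^ 2 := by
    intro i
    have ha : (0:ℝ) < ‖rowv A i‖ := norm_pos_iff.mpr (hrows i)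
    rw [hdiff i, norm_sub_sq_real, real_inner_smul_right, norm_smul, real_inner_comm]
    rw [mul_pow]
    rw [Real.norm_eq_abs, sq_abs]
    field_simp
    ring
  set F := frobSq A with hFdef
  set r : Fin m → ℝ := fun i => ‖proj A b i y - x‖ ^ 2 / ‖e‖ ^ 2 with hr
  set p : Fin m → ℝ := fun i => ‖rowv A i‖ ^ 2 / F with hp
  have hp_nonneg : ∀ i, 0 ≤ p i := fun i => by positivity
  have hpsum : ∑ i, p i = 1 := by
    rw [hp]
    rw [← Finset.sum_div, ← frobSq_eq]
    field_simp
    exact hFdef.symm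
  have hr_pos : ∀ i, 0 < r i := by
    intro i
    have := hproj i
    have h1 : (0:ℝ) < ‖proj A b i y - x‖ := norm_pos_iff.mpr (sub_ne_zero.mpr this)
    positivity
  -- log identity
  have hlog : ∀ i, Real.log (‖proj A b i y - x‖ / ‖e‖) = (1/2) * Real.log (r i) := by
    intro i
    have h1 : (0:ℝ) < ‖proj A b i y - x‖ := norm_pos_iff.mpr (sub_ne_zero.mpr (hproj i))
    have : r i = (‖proj A b i y - x‖ / ‖e‖) ^ 2 := by
      rw [hr]; simp [div_pow]
    rw [this, Real.log_pow]
    push_cast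
    ring
  -- sum identity
  have hnormAe : ‖mulV A e‖ ^ 2 = ∑ i, (inner (𝕜 := ℝ) (rowv A i) e) ^ 2 := by
    rw [normsq_eucl]
    exact Finset.sum_congr rfl fun i _ => by rw [inner_rowv]
  have hsum : ∑ i, p i * r i = 1 - ‖mulV A e‖ ^ 2 / (F * ‖e‖ ^ 2) := by
    have : ∀ i, p i * r i = p i - (inner (𝕜 := ℝ) (rowv A i) e) ^ 2 / (F * ‖e‖ ^ 2) := by
      intro i
      have ha : (0:ℝ) < ‖rowv A i‖ := norm_pos_iff.mpr (hrows i)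
      simp only [hp, hr]
      rw [hpi i]
      field_simp
    rw [Finset.sum_congr rfl fun i _ => this i, Finset.sum_sub_distrib, hpsum,
      ← Finset.sum_div, ← hnormAe]
  -- Jensen
  have hjensen : ∑ i, p i * Real.log (r i) ≤ Real.log (∑ i, p i * r i) := by
    have hconc : ConcaveOn ℝ (Set.Ioi 0) Real.log := strictConcaveOn_log_Ioi.concaveOn
    have := hconc.le_map_sum (t := Finset.univ) (w := p) (p := r)
      (fun i _ => hp_nonneg i) hpsum (fun i _ => hr_pos i)
    simpa [smul_eq_mul] using this
  calc ∑ i : Fin m, p i * Real.log (‖proj A b i y - x‖ / ‖e‖)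
      = ∑ i : Fin m, p i * ((1/2) * Real.log (r i)) := by
        exact Finset.sum_congr rfl fun i _ => by rw [hlog i]
    _ = (1/2) * ∑ i, p i * Real.log (r i) := by
        rw [Finset.mul_sum]; exact Finset.sum_congr rfl fun i _ => by ring
    _ ≤ (1/2) * Real.log (∑ i, p i * r i) := by linarith [hjensen]
    _ = (1/2) * Real.log (1 - ‖mulV A e‖ ^ 2 / (F * ‖e‖ ^ 2)) := by rw [hsum]
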